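/- For any nonnegative integers $m$ and $c$ with $c \le m$, the sum $\tilde{K}_{m,c} := \sum_{b=0}^{c} \frac{(m+1-b)\,(2m+2)!}{b!\,(2m+2-b)!}$ equals $\frac{1}{2}\,\frac{(2m+2)!}{c!\,(2m+1-c)!}$. -/

import Mathlib

lemma aux1 (x a b u v : ℚ) (ha : a ≠ 0) (hb : b ≠ 0) (hu : u ≠ 0) (hv : v ≠ 0) :
    1 / 2 * x / (a * (v * b)) + (v - u) / 2 * x / (u * a * (v * b))
      = 1 / 2 * x / (u * a * b) := by
  field_simp
  ring

/-- For `0 ≤ c ≤ m`,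
`∑_{b=0}^{c} (m+1-b)(2m+2)! / (b! (2m+2-b)!) = (1/2) (2m+2)! / (c! (2m+1-c)!)`. -/
theorem stmt1 (m c : ℕ) (h : c ≤ m) :
    ∑ b ∈ Finset.range (c + 1),
      (((m + 1 - b : ℕ) : ℚ) * (Nat.factorial (2 * m + 2) : ℚ) /
        ((Nat.factorial b : ℚ) * (Nat.factorial (2 * m + 2 - b) : ℚ)))
      = (1 / 2) * (Nat.factorial (2 * m + 2) : ℚ) /
          ((Nat.factorial c : ℚ) * (Nat.factorial (2 * m + 1 - c) : ℚ)) := by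
  induction c with
  | zero =>
      have h1 : 2 * m + 2 - 0 = (2 * m + 1) + 1 := rfl
      have h2 : (Nat.factorial ((2 * m + 1) + 1) : ℚ)
          = ((2 * m : ℚ) + 2) * Nat.factorial (2 * m + 1) := by
        rw [Nat.factorial_succ]; push_cast; ring
      have hF : (Nat.factorial (2 * m + 1) : ℚ) ≠ 0 :=
        Nat.cast_ne_zero.2 (Nat.factorial_ne_zero _)
      rw [Finset.sum_range_one, h1, h2]
      simp only [Nat.sub_zero, Nat.factorial_zero, Nat.cast_one, one_mul]
      field_simp
      push_cast
      ring
  | succ c ih =>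
      have hc : c ≤ m := Nat.le_of_succ_le h
      rw [Finset.sum_range_succ, ih hc]
      have e1 : 2 * m + 2 - (c + 1) = (2 * m + 1 - c) := by omega
      have e2 : 2 * m + 1 - (c + 1) = 2 * m - c := by omega
      have e3 : 2 * m + 1 - c = (2 * m - c) + 1 := by omega
      have e4 : (m + 1 - (c + 1) : ℕ) = m - c := by omega
      rw [e1, e2, e3, e4, Nat.factorial_succ (2 * m - c), Nat.factorial_succ c]
      have hmc : ((m - c : ℕ) : ℚ)
          = (((2 * m - c : ℕ) : ℚ) + 1 - ((c : ℚ) + 1)) / 2 := by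
        have h1 : ((m - c : ℕ) : ℚ) = (m : ℚ) - c := by push_cast [hc]; ring
        have h2 : ((2 * m - c : ℕ) : ℚ) = 2 * (m : ℚ) - c := by
          push_cast [show c ≤ 2 * m by omega]; ring
        rw [h1, h2]; ring
      rw [hmc]
      push_cast
      exact aux1 _ _ _ _ _
        (Nat.cast_ne_zero.2 (Nat.factorial_ne_zero _))
        (Nat.cast_ne_zero.2 (Nat.factorial_ne_zero _))
        (by positivity) (by positivity)
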